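/- Let f : X → X be a continuous map of a compact metric space and Λ a closed f-invariant subset such that the interior of Λ is nonempty, f|_Λ is chain transitive, and f has shadowing on B_b(Λ) for some b > 0. Then Λ is a terminal chain component of f (i.e., Λ is a chain component and is chain stable). -/
import Mathlib


open Metric Filter Topology Set

variable {X : Type*}

/-- `(c i)_{i=0}^k` is a `δ`-chain of `f` (up to index `k`). -/
def IsDeltaChain [MetricSpace X] (f : X → X) (δ : ℝ) (k : ℕ) (c : ℕ → X) : Prop :=
  ∀ i < k, dist (f (c i)) (c (i + 1)) ≤ δ

/-- `x → y` : for every `δ > 0` there is a `δ`-chain from `x` to `y`. -/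
def ChainReach [MetricSpace X] (f : X → X) (x y : X) : Prop :=
  ∀ δ > 0, ∃ k ≥ 1, ∃ c : ℕ → X, c 0 = x ∧ c k = y ∧ IsDeltaChain f δ k c

/-- The chain recurrent set. -/
def ChainRec [MetricSpace X] (f : X → X) : Set X := {x | ChainReach f x x}

/-- `C` is a chain component of `f`. -/
def IsChainComponent [MetricSpace X] (f : X → X) (C : Set X) : Prop :=
  ∃ x, ChainReach f x x ∧
    C = {y | ChainReach f y y ∧ ChainReach f x y ∧ ChainReach f y x}

/-- A set is chain stable iff points chain-reachable from it stay in it. -/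
def ChainStable [MetricSpace X] (f : X → X) (S : Set X) : Prop :=
  ∀ x ∈ S, ∀ y, ChainReach f x y → y ∈ S

/-- `S` is "initially stable": if `y → x` with `x ∈ S` then `y ∈ S`. -/
def InitialStable [MetricSpace X] (f : X → X) (S : Set X) : Prop :=
  ∀ x ∈ S, ∀ y, ChainReach f y x → y ∈ S

/-- `f` restricted to `Λ` is chain transitive. -/
def ChainTransitiveOn [MetricSpace X] (f : X → X) (Λ : Set X) : Prop :=
  ∀ p ∈ Λ, ∀ q ∈ Λ, ∀ δ > 0, ∃ k ≥ 1, ∃ c : ℕ → X,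
    c 0 = p ∧ c k = q ∧ (∀ i ≤ k, c i ∈ Λ) ∧ IsDeltaChain f δ k c

/-- `f` has shadowing on `S`. -/
def ShadowsOn [MetricSpace X] (f : X → X) (S : Set X) : Prop :=
  ∀ ε > 0, ∃ δ > 0, ∀ (k : ℕ) (c : ℕ → X), (∀ i ≤ k, c i ∈ S) →
    IsDeltaChain f δ k c → ∃ x, ∀ i ≤ k, dist (c i) (f^[i] x) ≤ ε

/-- Iterate of a homeomorphism indexed by `ℤ`. -/
def hIter [TopologicalSpace X] (f : X ≃ₜ X) (i : ℤ) : X → X :=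
  if 0 ≤ i then (⇑f)^[i.toNat] else (⇑f.symm)^[(-i).toNat]

/-- A `δ`-limit-pseudo orbit of the homeomorphism `f`. -/
def IsLimitPseudoOrbit [MetricSpace X] (f : X ≃ₜ X) (δ : ℝ) (ξ : ℤ → X) : Prop :=
  (∀ i : ℤ, dist (f (ξ i)) (ξ (i + 1)) ≤ δ) ∧
  Tendsto (fun i : ℤ => dist (f (ξ i)) (ξ (i + 1))) atBot (nhds 0) ∧
  Tendsto (fun i : ℤ => dist (f (ξ i)) (ξ (i + 1))) atTop (nhds 0)

/-- `f` has L-shadowing on `S`. -/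
def LShadowsOn [MetricSpace X] (f : X ≃ₜ X) (S : Set X) : Prop :=
  ∀ ε > 0, ∃ δ > 0, ∀ ξ : ℤ → X, (∀ i : ℤ, ξ i ∈ S) →
    IsLimitPseudoOrbit f δ ξ →
    ∃ x : X, (∀ i : ℤ, dist (ξ i) (hIter f i x) ≤ ε) ∧
      Tendsto (fun i : ℤ => dist (ξ i) (hIter f i x)) atBot (nhds 0) ∧
      Tendsto (fun i : ℤ => dist (ξ i) (hIter f i x)) atTop (nhds 0)

/-- `f` is expansive on `S`. -/
def ExpansiveOn [MetricSpace X] (f : X ≃ₜ X) (S : Set X) : Prop :=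
  ∃ e > 0, ∀ x y : X, (∀ i : ℤ, hIter f i x ∈ S) → (∀ i : ℤ, hIter f i y ∈ S) →
    (∀ i : ℤ, dist (hIter f i x) (hIter f i y) ≤ e) → x = y

/-- Closed `b`-neighborhood of `S`. -/
def Nbhd [MetricSpace X] (b : ℝ) (S : Set X) : Set X := {x | Metric.infDist x S ≤ b}

/-- Attractor for a continuous map `f`. -/
def IsAttractor [TopologicalSpace X] (f : X → X) (Λ : Set X) : Prop :=
  IsClosed Λ ∧ f '' Λ = Λ ∧
    ∃ U : Set X, IsOpen U ∧ f '' closure U ⊆ U ∧ Λ = ⋂ i : ℕ, f^[i] '' U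

/-- `f` is (topologically) mixing. -/
def IsMixing [TopologicalSpace X] (f : X → X) : Prop :=
  ∀ U V : Set X, IsOpen U → IsOpen V → U.Nonempty → V.Nonempty →
    ∃ j : ℕ, ∀ i ≥ j, (f^[i] '' U ∩ V).Nonempty

/-- The ω-limit set of `x` under `f`. -/
def OmegaSet [TopologicalSpace X] (f : X → X) (x : X) : Set X :=
  {y | ∃ φ : ℕ → ℕ, StrictMono φ ∧ Tendsto (fun j => f^[φ j] x) atTop (nhds y)}

/-- `M` is a minimal set for `f`. -/
def IsMinimalSet [TopologicalSpace X] (f : X → X) (M : Set X) : Prop :=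
  M.Nonempty ∧ IsClosed M ∧ f '' M ⊆ M ∧ ∀ x ∈ M, OmegaSet f x = M

theorem stmt6 [MetricSpace X] [CompactSpace X] (f : X → X) (hf : Continuous f)
    (Λ : Set X) (hΛc : IsClosed Λ) (hΛinv : f '' Λ ⊆ Λ)
    (hint : (interior Λ).Nonempty) (hct : ChainTransitiveOn f Λ)
    (b : ℝ) (hb : 0 < b) (hsh : ShadowsOn f (Nbhd b Λ)) :
    IsChainComponent f Λ ∧ ChainStable f Λ := by
  obtain ⟨p, hp⟩ := hint
  have hpΛ : p ∈ Λ := interior_subset hp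
  obtain ⟨r, hr, hball⟩ := Metric.isOpen_iff.1 isOpen_interior p hp
  have hballΛ : ball p r ⊆ Λ := hball.trans interior_subset
  have hΛcomp : IsCompact Λ := hΛc.isCompact
  have hΛne : Λ.Nonempty := ⟨p, hpΛ⟩
  have hiter : ∀ z ∈ Λ, ∀ j, f^[j] z ∈ Λ := by
    intro z hz j
    induction j with
    | zero => simpa
    | succ j ih => rw [Function.iterate_succ_apply']; exact hΛinv ⟨_, ih, rfl⟩
  -- chain stability
  have key : ChainStable f Λ := by
    intro x hx y hxy
    have hinf : ∀ ε > 0, infDist y Λ ≤ ε := by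
      intro ε hε
      set ε₁ := min ε (min r b) / 4 with hε₁def
      have hε₁ : 0 < ε₁ := by
        have : 0 < min ε (min r b) := lt_min hε (lt_min hr hb)
        positivity
      have hε₁ε : ε₁ ≤ ε / 4 := by
        have := min_le_left ε (min r b); simp only [hε₁def]; linarith
      have hε₁r : ε₁ ≤ r / 4 := by
        have h1 := min_le_right ε (min r b)
        have h2 := min_le_left r b
        simp only [hε₁def]; linarith
      have hε₁b : ε₁ ≤ b / 4 := by
        have h1 := min_le_right ε (min r b)
        have h2 := min_le_right r b
        simp only [hε₁def]; linarith
      obtain ⟨η, hη, hηc⟩ := Metric.uniformContinuous_iff.1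
        (CompactSpace.uniformContinuous_of_continuous hf) ε₁ hε₁
      set ε₂ := min ε₁ η / 2 with hε₂def
      have hε₂ : 0 < ε₂ := by
        have : 0 < min ε₁ η := lt_min hε₁ hη
        positivity
      have hε₂ε₁ : ε₂ ≤ ε₁ := by
        have := min_le_left ε₁ η; simp only [hε₂def]; linarith
      have hε₂η : ε₂ < η := by
        have := min_le_right ε₁ η; simp only [hε₂def]; linarith
      obtain ⟨δ, hδ, hδsh⟩ := hsh ε₂ hε₂
      set δ' := min δ ε₁ with hδ'def
      have hδ' : 0 < δ' := lt_min hδ hε₁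
      have hδ'δ : δ' ≤ δ := min_le_left _ _
      have hδ'ε₁ : δ' ≤ ε₁ := min_le_right _ _
      obtain ⟨k, hk, c, hc0, hck, hcchain⟩ := hxy δ' hδ'
      obtain ⟨m, hm, d, hd0, hdm, hdΛ, hdchain⟩ := hct p hpΛ x hx δ' hδ'
      set e : ℕ → X := fun i => if i ≤ m then d i else c (i - m) with hedef
      have he0 : e 0 = p := by simp [hedef, Nat.zero_le, hd0]
      have heval : ∀ i, m ≤ i → e i = c (i - m) := by
        intro i hi
        rcases eq_or_lt_of_le hi with h | h
        · simp [hedef, ← h, hdm, hc0]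
        · simp [hedef, Nat.not_le.2 h]
      have heend : e (m + k) = y := by
        rw [heval _ (Nat.le_add_right m k), Nat.add_sub_cancel_left, hck]
      have hechain : IsDeltaChain f δ' (m + k) e := by
        intro i hi
        rcases Nat.lt_or_ge i m with h | h
        · have h1 : e i = d i := by simp [hedef, h.le]
          have h2 : e (i + 1) = d (i + 1) := by simp [hedef, Nat.succ_le_of_lt h]
          rw [h1, h2]; exact hdchain i h
        · have h1 : e i = c (i - m) := heval i h
          have h2 : e (i + 1) = c (i - m + 1) := by
            rw [heval _ (le_trans h (Nat.le_succ i))]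
            congr 1
            omega
          rw [h1, h2]
          exact hcchain (i - m) (by omega)
      have main : ∀ n, n ≤ m + k → ∀ j, j ≤ n → infDist (e j) Λ ≤ ε₂ := by
        intro n
        induction n with
        | zero =>
          intro _ j hj
          have : j = 0 := Nat.le_zero.1 hj
          subst this
          rw [he0, infDist_zero_of_mem hpΛ]
          exact hε₂.le
        | succ n ih =>
          intro hn j hj
          have hIH : ∀ j, j ≤ n → infDist (e j) Λ ≤ ε₂ :=
            ih (le_trans (Nat.le_succ n) hn)
          -- step bound for e (n+1)
          have hstep : infDist (e (n + 1)) Λ ≤ ε₁ + δ' := by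
            obtain ⟨w, hw, hwd⟩ := hΛcomp.exists_infDist_eq_dist hΛne (e n)
            have hdw : dist (e n) w < η := by
              have := hIH n le_rfl
              rw [hwd] at this
              linarith
            have h1 : dist (f (e n)) (f w) < ε₁ := hηc hdw
            have h2 : dist (f (e n)) (e (n + 1)) ≤ δ' := hechain n (by omega)
            have h3 : f w ∈ Λ := hΛinv ⟨w, hw, rfl⟩
            calc infDist (e (n + 1)) Λ ≤ dist (e (n + 1)) (f w) := infDist_le_dist_of_mem h3
              _ ≤ dist (e (n + 1)) (f (e n)) + dist (f (e n)) (f w) := dist_triangle _ _ _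
              _ ≤ δ' + ε₁ := by rw [dist_comm]; exact add_le_add h2 h1.le
              _ = ε₁ + δ' := add_comm _ _
          -- the chain up to n+1 lies in Nbhd b Λ
          have hnbhd : ∀ i, i ≤ n + 1 → e i ∈ Nbhd b Λ := by
            intro i hi
            rcases Nat.lt_or_ge i (n + 1) with h | h
            · have := hIH i (by omega)
              show infDist (e i) Λ ≤ b
              linarith
            · have hieq : i = n + 1 := by omega
              show infDist (e i) Λ ≤ b
              rw [hieq]
              linarith
          obtain ⟨z, hz⟩ := hδsh (n + 1) e hnbhd
            (fun i hi => le_trans (hechain i (by omega)) hδ'δ)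
          have hzΛ : z ∈ Λ := by
            apply hballΛ
            have := hz 0 (Nat.zero_le _)
            rw [he0] at this
            simp only [Function.iterate_zero, id_eq] at this
            exact mem_ball'.2 (by linarith)
          calc infDist (e j) Λ ≤ dist (e j) (f^[j] z) :=
                infDist_le_dist_of_mem (hiter z hzΛ j)
            _ ≤ ε₂ := hz j hj
      have := main (m + k) le_rfl (m + k) le_rfl
      rw [heend] at this
      linarith
    have h0 : infDist y Λ = 0 :=
      le_antisymm (le_of_forall_pos_le_add (by intro ε hε; simpa using hinf ε hε)) infDist_nonneg
    exact (hΛc.mem_iff_infDist_zero hΛne).2 h0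
  have reach : ∀ a ∈ Λ, ∀ a' ∈ Λ, ChainReach f a a' := by
    intro a ha a' ha' δ hδ
    obtain ⟨k, hk, c, h0, hk', _, hch⟩ := hct a ha a' ha' δ hδ
    exact ⟨k, hk, c, h0, hk', hch⟩
  refine ⟨⟨p, reach p hpΛ p hpΛ, ?_⟩, key⟩
  ext y
  constructor
  · intro hy
    exact ⟨reach y hy y hy, reach p hpΛ y hy, reach y hy p hpΛ⟩
  · rintro ⟨_, hpy, _⟩
    exact key p hpΛ y hpy
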